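/- Let T be a densely defined closed antilinear operator from H to K with Moore–Penrose inverse T† (defined as the inverse of T restricted to N(T)^⊥ ∩ D(T) on R(T), and 0 on R(T)^⊥). Then (T^♯)† = (T†)^♯. -/

import Mathlib

open Classical
noncomputable section

variable {H K : Type*}
  [NormedAddCommGroup H] [InnerProductSpace ℂ H] [CompleteSpace H]
  [NormedAddCommGroup K] [InnerProductSpace ℂ K] [CompleteSpace K]

/-- `D` is a complex linear subspace of `H` (as a set). -/
def IsLinSubspace (D : Set H) : Prop :=
  (0 : H) ∈ D ∧ ∀ (a : ℂ) (x y : H), x ∈ D → y ∈ D → a • x + y ∈ D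

/-- `f` is (complex) linear on `D`. -/
def LinearOn (D : Set H) (f : H → K) : Prop :=
  ∀ (a : ℂ) (x y : H), x ∈ D → y ∈ D → f (a • x + y) = a • f x + f y

/-- `f` is antilinear (conjugate-linear) on `D`. -/
def AntilinearOn (D : Set H) (f : H → K) : Prop :=
  ∀ (a : ℂ) (x y : H), x ∈ D → y ∈ D → f (a • x + y) = (starRingEnd ℂ a) • f x + f y

/-- The operator with domain `D` given by `f` has closed graph, i.e. is a closed operator. -/
def HasClosedGraph (D : Set H) (f : H → K) : Prop :=
  IsClosed {p : H × K | p.1 ∈ D ∧ f p.1 = p.2}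

/-- `C` is a conjugation on `K`: an isometric antilinear involution. -/
def IsConjugation (C : K → K) : Prop :=
  (∀ (a : ℂ) (x y : K), C (a • x + y) = (starRingEnd ℂ a) • C x + C y) ∧
  (∀ x, C (C x) = x) ∧
  ∀ x y : K, (inner ℂ (C x) (C y) : ℂ) = inner ℂ y x

/-- Domain of the (linear) Hilbert space adjoint of the operator `(D, f)`. -/
def adjDom (D : Set H) (f : H → K) : Set K :=
  {y | ∃ u : H, ∀ x ∈ D, (inner ℂ (f x) y : ℂ) = inner ℂ x u}

/-- The (linear) Hilbert space adjoint of the operator `(D, f)`; `0` outside its domain.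
For a densely defined operator the vector `u` below is unique. -/
def adjFun (D : Set H) (f : H → K) : K → H := fun y =>
  if h : ∃ u : H, ∀ x ∈ D, (inner ℂ (f x) y : ℂ) = inner ℂ x u then h.choose else 0

/-- Domain of the antilinear adjoint `T^♯` of the operator `(D, f)`:
`y ∈ D(T^♯)` iff there is `u` with `conj ⟪f x, y⟫ = ⟪x, u⟫` for all `x ∈ D`. -/
def sharpDom (D : Set H) (f : H → K) : Set K :=
  {y | ∃ u : H, ∀ x ∈ D, (starRingEnd ℂ) (inner ℂ (f x) y : ℂ) = inner ℂ x u}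

/-- The antilinear adjoint `T^♯`; `0` outside its domain.
For a densely defined operator the vector `u` below is unique. -/
def sharpFun (D : Set H) (f : H → K) : K → H := fun y =>
  if h : ∃ u : H, ∀ x ∈ D, (starRingEnd ℂ) (inner ℂ (f x) y : ℂ) = inner ℂ x u then h.choose
  else 0

/-- Orthogonal complement (as a set) of a set. -/
def perpSet (S : Set K) : Set K := {y | ∀ z ∈ S, (inner ℂ z y : ℂ) = 0}


/-- The orthogonal complement of the kernel `N(T)` of the operator `T = (D, f)`. -/
def nullPerp (D : Set H) (f : H → K) : Set H := perpSet {x : H | x ∈ D ∧ f x = 0}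

/-- Domain `R(T) ⊕ R(T)^⊥` of the Moore–Penrose inverse of `T = (D, f)`. -/
def pinvDom (D : Set H) (f : H → K) : Set K :=
  {y : K | ∃ r ∈ f '' D, ∃ p ∈ perpSet (f '' D), y = r + p}

/-- The Moore–Penrose inverse of `T = (D, f)`: for `y = y₁ + y₂` with `y₁ ∈ R(T)` and
`y₂ ∈ R(T)^⊥`, it is the unique `x ∈ N(T)^⊥ ∩ D(T)` with `f x = y₁` (and it is `0` outside
`R(T) ⊕ R(T)^⊥`; such an `x` is unique for a closed operator). -/
def pinvFun (D : Set H) (f : H → K) : K → H := fun y =>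
  if h : ∃ x, x ∈ D ∧ x ∈ nullPerp D f ∧ f x - y ∈ perpSet (f '' D) then h.choose else 0
open scoped ComplexInnerProductSpace

section AuxBasic

variable {E F : Type*}
  [NormedAddCommGroup E] [InnerProductSpace ℂ E]
  [NormedAddCommGroup F] [InnerProductSpace ℂ F]

lemma IsLinSubspace.smul_mem' {D : Set E} (hsub : IsLinSubspace D) {x : E} (hx : x ∈ D)
    (a : ℂ) : a • x ∈ D := by
  simpa using hsub.2 a x 0 hx hsub.1

lemma IsLinSubspace.add_mem' {D : Set E} (hsub : IsLinSubspace D) {x y : E} (hx : x ∈ D)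
    (hy : y ∈ D) : x + y ∈ D := by
  simpa using hsub.2 1 x y hx hy

lemma IsLinSubspace.neg_mem' {D : Set E} (hsub : IsLinSubspace D) {x : E} (hx : x ∈ D) :
    -x ∈ D := by
  simpa using hsub.smul_mem' hx (-1)

lemma IsLinSubspace.sub_mem' {D : Set E} (hsub : IsLinSubspace D) {x y : E} (hx : x ∈ D)
    (hy : y ∈ D) : x - y ∈ D := by
  rw [sub_eq_add_neg]; exact hsub.add_mem' hx (hsub.neg_mem' hy)

lemma AntilinearOn.map_zero' {D : Set E} {f : E → F} (hsub : IsLinSubspace D)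
    (hanti : AntilinearOn D f) : f 0 = 0 := by
  have h := hanti 1 0 0 hsub.1 hsub.1
  simp only [one_smul, add_zero, map_one] at h
  exact (add_eq_left).mp h.symm

lemma AntilinearOn.map_add' {D : Set E} {f : E → F} (hanti : AntilinearOn D f)
    {x y : E} (hx : x ∈ D) (hy : y ∈ D) : f (x + y) = f x + f y := by
  simpa using hanti 1 x y hx hy

lemma AntilinearOn.map_sub' {D : Set E} {f : E → F} (hanti : AntilinearOn D f)
    {x y : E} (hx : x ∈ D) (hy : y ∈ D) : f (x - y) = f x - f y := by
  have h := hanti (-1) y x hy hx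
  simp only [neg_one_smul, map_neg, map_one] at h
  rw [show -y + x = x - y by abel] at h
  rw [h]; abel

lemma AntilinearOn.map_smul' {D : Set E} {f : E → F} (hsub : IsLinSubspace D)
    (hanti : AntilinearOn D f) {x : E} (hx : x ∈ D) (a : ℂ) :
    f (a • x) = (starRingEnd ℂ a) • f x := by
  have h := hanti a x 0 hx hsub.1
  simpa [hanti.map_zero' hsub] using h

/-- Uniqueness from a dense set: if two vectors have the same inner products against a dense
set, they are equal. -/
lemma dense_ext {D : Set E} (hd : Dense D) {u v : E}
    (h : ∀ x ∈ D, ⟪x, u⟫ = ⟪x, v⟫) : u = v := by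
  have h0 : ∀ x : E, ⟪x, u - v⟫ = 0 := by
    have hc : Continuous fun x : E => ⟪x, u - v⟫ :=
      continuous_id.inner continuous_const
    have heq : Set.EqOn (fun x : E => ⟪x, u - v⟫) (fun _ => 0) D := fun x hx => by
      simp [inner_sub_right, h x hx]
    have hcl := heq.closure hc continuous_const
    intro x
    exact hcl (hd x)
  have h1 := h0 (u - v)
  rw [inner_self_eq_zero] at h1
  exact sub_eq_zero.mp h1

lemma mem_perpSet {S : Set F} {y : F} : y ∈ perpSet S ↔ ∀ z ∈ S, ⟪z, y⟫ = 0 := Iff.rfl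

lemma perpSet_zero_mem (S : Set F) : (0 : F) ∈ perpSet S := fun z _ => inner_zero_right z

lemma perpSet_sub_mem {S : Set F} {x y : F} (hx : x ∈ perpSet S) (hy : y ∈ perpSet S) :
    x - y ∈ perpSet S := fun z hz => by
  rw [inner_sub_right, hx z hz, hy z hz, sub_zero]

lemma perpSet_neg_mem {S : Set F} {x : F} (hx : x ∈ perpSet S) : -x ∈ perpSet S := fun z hz => by
  rw [inner_neg_right, hx z hz, neg_zero]

lemma eq_zero_of_mem_of_perp {S : Set F} {x : F} (h1 : x ∈ S) (h2 : x ∈ perpSet S) : x = 0 :=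
  inner_self_eq_zero.mp (h2 x h1)

/-- `perpSet S` as a (complex) submodule. -/
def perpSub (S : Set F) : Submodule ℂ F where
  carrier := perpSet S
  add_mem' := fun {x y} hx hy z hz => by
    rw [inner_add_right, hx z hz, hy z hz, add_zero]
  zero_mem' := perpSet_zero_mem S
  smul_mem' := fun a {x} hx z hz => by
    rw [inner_smul_right, hx z hz, mul_zero]

lemma perpSub_isClosed (S : Set F) : IsClosed ((perpSub S : Submodule ℂ F) : Set F) := by
  have : ((perpSub S : Submodule ℂ F) : Set F) = ⋂ z ∈ S, {y : F | ⟪z, y⟫ = 0} := by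
    ext y; simp [perpSub, perpSet, Set.mem_iInter]
  rw [this]
  exact isClosed_biInter fun z _ => isClosed_eq (continuous_const.inner continuous_id)
    continuous_const

/-- Decomposition with respect to a closed submodule. -/
lemma decomp_closed (N : Submodule ℂ E) (hc : IsClosed (N : Set E)) [CompleteSpace E] (x : E) :
    ∃ n ∈ N, x - n ∈ perpSet (N : Set E) := by
  haveI : CompleteSpace N := hc.completeSpace_coe
  refine ⟨N.starProjection x, N.starProjection_apply_mem x, ?_⟩
  have h := Submodule.sub_starProjection_mem_orthogonal (K := N) x
  intro z hz
  exact (Submodule.mem_orthogonal N _).1 h z hz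

end AuxBasic
section AuxSharp

variable {E F : Type*}
  [NormedAddCommGroup E] [InnerProductSpace ℂ E]
  [NormedAddCommGroup F] [InnerProductSpace ℂ F]

lemma sharpFun_spec {D : Set E} {f : E → F} {y : F} (hy : y ∈ sharpDom D f) :
    ∀ x ∈ D, (starRingEnd ℂ) ⟪f x, y⟫ = ⟪x, sharpFun D f y⟫ := by
  have hy' : ∃ u : E, ∀ x ∈ D, (starRingEnd ℂ) (inner ℂ (f x) y : ℂ) = inner ℂ x u := hy
  simp only [sharpFun, dif_pos hy']
  exact hy'.choose_spec

lemma sharpFun_eq {D : Set E} {f : E → F} (hd : Dense D) {y : F} {u : E}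
    (h : ∀ x ∈ D, (starRingEnd ℂ) ⟪f x, y⟫ = ⟪x, u⟫) : sharpFun D f y = u := by
  refine dense_ext hd fun x hx => ?_
  rw [← sharpFun_spec ⟨u, h⟩ x hx, h x hx]

/-- `N(T^♯) = R(T)^⊥`: the kernel of the sharp adjoint. -/
lemma sharp_null_iff {D : Set E} {f : E → F} (hd : Dense D) {w : F} :
    (w ∈ sharpDom D f ∧ sharpFun D f w = 0) ↔ ∀ x ∈ D, ⟪f x, w⟫ = 0 := by
  constructor
  · rintro ⟨hw, hw0⟩ x hx
    have := sharpFun_spec hw x hx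
    rw [hw0, inner_zero_right] at this
    simpa using congrArg (starRingEnd ℂ) this
  · intro h
    have hmem : w ∈ sharpDom D f := ⟨0, fun x hx => by rw [h x hx, inner_zero_right, map_zero]⟩
    exact ⟨hmem, sharpFun_eq hd fun x hx => by rw [h x hx, inner_zero_right, map_zero]⟩

lemma sharpDom_sub {D : Set E} {f : E → F} (hd : Dense D) {w₁ w₂ : F}
    (h1 : w₁ ∈ sharpDom D f) (h2 : w₂ ∈ sharpDom D f) :
    w₁ - w₂ ∈ sharpDom D f ∧
      sharpFun D f (w₁ - w₂) = sharpFun D f w₁ - sharpFun D f w₂ := by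
  have key : ∀ x ∈ D, (starRingEnd ℂ) ⟪f x, w₁ - w₂⟫ =
      ⟪x, sharpFun D f w₁ - sharpFun D f w₂⟫ := fun x hx => by
    rw [inner_sub_right, map_sub, sharpFun_spec h1 x hx, sharpFun_spec h2 x hx,
      inner_sub_right]
  exact ⟨⟨_, key⟩, sharpFun_eq hd key⟩

/-- Easy inclusion `N(T) ⊆ R(T^♯)^⊥`. -/
lemma null_mem_perp_range_sharp {D : Set E} {f : E → F} {q : E} (hq : q ∈ D) (hq0 : f q = 0) :
    q ∈ perpSet (sharpFun D f '' sharpDom D f) := by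
  rintro z ⟨w, hw, rfl⟩
  have := sharpFun_spec hw q hq
  rw [hq0, inner_zero_left, map_zero] at this
  rw [← inner_conj_symm, ← this, map_zero]

end AuxSharp

section AuxNull

variable {E F : Type*}
  [NormedAddCommGroup E] [InnerProductSpace ℂ E]
  [NormedAddCommGroup F] [InnerProductSpace ℂ F]

/-- The kernel of `T = (D, f)` as a complex submodule. -/
def nullSub {D : Set E} {f : E → F} (hsub : IsLinSubspace D) (hanti : AntilinearOn D f) :
    Submodule ℂ E where
  carrier := {x | x ∈ D ∧ f x = 0}
  add_mem' := fun {x y} hx hy =>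
    ⟨hsub.add_mem' hx.1 hy.1, by rw [hanti.map_add' hx.1 hy.1, hx.2, hy.2, add_zero]⟩
  zero_mem' := ⟨hsub.1, hanti.map_zero' hsub⟩
  smul_mem' := fun a {x} hx =>
    ⟨hsub.smul_mem' hx.1 a, by rw [hanti.map_smul' hsub hx.1, hx.2, smul_zero]⟩

lemma nullSub_isClosed {D : Set E} {f : E → F} (hsub : IsLinSubspace D)
    (hanti : AntilinearOn D f) (hclosed : HasClosedGraph D f) :
    IsClosed ((nullSub hsub hanti : Submodule ℂ E) : Set E) := by
  have hset : ((nullSub hsub hanti : Submodule ℂ E) : Set E)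
      = (fun x : E => (x, (0 : F))) ⁻¹' {p : E × F | p.1 ∈ D ∧ f p.1 = p.2} := by
    ext x; simp [nullSub, eq_comm]
  rw [hset]
  exact hclosed.preimage (continuous_id.prodMk continuous_const)

lemma nullPerp_eq_perp_nullSub {D : Set E} {f : E → F} (hsub : IsLinSubspace D)
    (hanti : AntilinearOn D f) :
    nullPerp D f = perpSet ((nullSub hsub hanti : Submodule ℂ E) : Set E) := rfl

end AuxNull
set_option linter.unusedSectionVars false

section AuxPinv

variable {E F : Type*}
  [NormedAddCommGroup E] [InnerProductSpace ℂ E] [CompleteSpace E]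
  [NormedAddCommGroup F] [InnerProductSpace ℂ F] [CompleteSpace F]

/-- Characterization of the domain of the Moore–Penrose inverse. -/
lemma pinvDom_iff {D : Set E} {f : E → F} (hsub : IsLinSubspace D) (hanti : AntilinearOn D f)
    (hclosed : HasClosedGraph D f) {y : F} :
    y ∈ pinvDom D f ↔ ∃ x, x ∈ D ∧ x ∈ nullPerp D f ∧ f x - y ∈ perpSet (f '' D) := by
  constructor
  · rintro ⟨r, ⟨x₀, hx₀, rfl⟩, p, hp, rfl⟩
    obtain ⟨n, hn, hmn⟩ := decomp_closed (nullSub hsub hanti)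
      (nullSub_isClosed hsub hanti hclosed) x₀
    refine ⟨x₀ - n, hsub.sub_mem' hx₀ hn.1, hmn, ?_⟩
    have hfx : f (x₀ - n) = f x₀ := by
      rw [hanti.map_sub' hx₀ hn.1, hn.2, sub_zero]
    rw [hfx, show f x₀ - (f x₀ + p) = -p by abel]
    exact perpSet_neg_mem hp
  · rintro ⟨x, hx, hxn, hxp⟩
    exact ⟨f x, ⟨x, hx, rfl⟩, -(f x - y), perpSet_neg_mem hxp, by abel⟩

lemma pinvFun_spec {D : Set E} {f : E → F} (hsub : IsLinSubspace D) (hanti : AntilinearOn D f)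
    (hclosed : HasClosedGraph D f) {y : F} (hy : y ∈ pinvDom D f) :
    pinvFun D f y ∈ D ∧ pinvFun D f y ∈ nullPerp D f ∧
      f (pinvFun D f y) - y ∈ perpSet (f '' D) := by
  have h := (pinvDom_iff hsub hanti hclosed).1 hy
  simp only [pinvFun, dif_pos h]
  exact h.choose_spec

/-- Uniqueness of the Moore–Penrose representative. -/
lemma pinv_unique {D : Set E} {f : E → F} (hsub : IsLinSubspace D) (hanti : AntilinearOn D f)
    {y : F} {x₁ x₂ : E}
    (h1 : x₁ ∈ D ∧ x₁ ∈ nullPerp D f ∧ f x₁ - y ∈ perpSet (f '' D))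
    (h2 : x₂ ∈ D ∧ x₂ ∈ nullPerp D f ∧ f x₂ - y ∈ perpSet (f '' D)) : x₁ = x₂ := by
  have hd : x₁ - x₂ ∈ D := hsub.sub_mem' h1.1 h2.1
  have hfd : f (x₁ - x₂) ∈ perpSet (f '' D) := by
    rw [hanti.map_sub' h1.1 h2.1, show f x₁ - f x₂ = (f x₁ - y) - (f x₂ - y) by abel]
    exact perpSet_sub_mem h1.2.2 h2.2.2
  have hfd0 : f (x₁ - x₂) = 0 := eq_zero_of_mem_of_perp (show f (x₁ - x₂) ∈ f '' D from ⟨x₁ - x₂, hd, rfl⟩) hfd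
  have hdn : x₁ - x₂ ∈ {x : E | x ∈ D ∧ f x = 0} := ⟨hd, hfd0⟩
  have hdp : x₁ - x₂ ∈ nullPerp D f := perpSet_sub_mem h1.2.1 h2.2.1
  have := eq_zero_of_mem_of_perp hdn hdp
  exact sub_eq_zero.mp this

lemma pinvFun_eq {D : Set E} {f : E → F} (hsub : IsLinSubspace D) (hanti : AntilinearOn D f)
    (hclosed : HasClosedGraph D f) {y : F} {x : E}
    (hx : x ∈ D ∧ x ∈ nullPerp D f ∧ f x - y ∈ perpSet (f '' D)) : pinvFun D f y = x := by
  have hy : y ∈ pinvDom D f := (pinvDom_iff hsub hanti hclosed).2 ⟨x, hx⟩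
  exact pinv_unique hsub hanti (pinvFun_spec hsub hanti hclosed hy) hx

/-- The range of `T = (D, f)` as a complex submodule. -/
def rangeSub {D : Set E} {f : E → F} (hsub : IsLinSubspace D) (hanti : AntilinearOn D f) :
    Submodule ℂ F where
  carrier := f '' D
  add_mem' := by
    rintro _ _ ⟨x, hx, rfl⟩ ⟨y, hy, rfl⟩
    exact ⟨x + y, hsub.add_mem' hx hy, hanti.map_add' hx hy⟩
  zero_mem' := ⟨0, hsub.1, hanti.map_zero' hsub⟩
  smul_mem' := by
    rintro a _ ⟨x, hx, rfl⟩
    refine ⟨(starRingEnd ℂ a) • x, hsub.smul_mem' hx _, ?_⟩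
    rw [hanti.map_smul' hsub hx, Complex.conj_conj]

/-- `R(T) ⊕ R(T)^⊥` is dense. -/
lemma pinvDom_dense {D : Set E} {f : E → F} (hsub : IsLinSubspace D)
    (hanti : AntilinearOn D f) : Dense (pinvDom D f) := by
  intro k
  set Rc := (rangeSub hsub hanti).topologicalClosure with hRc
  have hRcc : IsClosed ((Rc : Submodule ℂ F) : Set F) := (rangeSub hsub hanti).isClosed_topologicalClosure
  obtain ⟨c, hc, hp⟩ := decomp_closed Rc hRcc k
  have hpperp : k - c ∈ perpSet (f '' D) := by
    intro z hz
    exact hp z ((rangeSub hsub hanti).le_topologicalClosure hz)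
  have hcc : c ∈ closure (f '' D) := by
    have : ((Rc : Submodule ℂ F) : Set F) = closure (f '' D) :=
      (rangeSub hsub hanti).topologicalClosure_coe
    rw [← this]; exact hc
  have himg : (fun r => r + (k - c)) '' (f '' D) ⊆ pinvDom D f := by
    rintro _ ⟨r, hr, rfl⟩
    exact ⟨r, hr, k - c, hpperp, rfl⟩
  have hcont : Continuous fun r : F => r + (k - c) := continuous_id.add continuous_const
  have : c + (k - c) ∈ closure (pinvDom D f) := by
    have h1 : c + (k - c) ∈ (fun r => r + (k - c)) '' closure (f '' D) := ⟨c, hcc, rfl⟩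
    have h2 := image_closure_subset_closure_image (s := f '' D) hcont
    exact closure_mono himg (h2 h1)
  simpa using this

end AuxPinv
section VonNeumann

variable {E F : Type*}
  [NormedAddCommGroup E] [InnerProductSpace ℂ E] [CompleteSpace E]
  [NormedAddCommGroup F] [InnerProductSpace ℂ F] [CompleteSpace F]

/-- Hard direction (von Neumann): `R(T^♯)^⊥ ⊆ N(T)` for a densely defined closed
antilinear operator. -/
lemma null_of_perp_range_sharp {D : Set E} {f : E → F} (hsub : IsLinSubspace D)
    (hanti : AntilinearOn D f) (hdense : Dense D) (hclosed : HasClosedGraph D f)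
    {q : E} (hq : q ∈ perpSet (sharpFun D f '' sharpDom D f)) : q ∈ D ∧ f q = 0 := by
  letI : InnerProductSpace ℝ E := InnerProductSpace.complexToReal
  letI : InnerProductSpace ℝ F := InnerProductSpace.complexToReal
  have hrsmulE : ∀ (r : ℝ) (x : E), (r : ℂ) • x = r • x := fun r x => by
    rw [← algebraMap_smul ℂ r x, Complex.coe_algebraMap]
  have hrsmulF : ∀ (r : ℝ) (x : F), (r : ℂ) • x = r • x := fun r x => by
    rw [← algebraMap_smul ℂ r x, Complex.coe_algebraMap]
  have rinE : ∀ (x y : E), inner ℝ x y = Complex.re (inner ℂ x y) := fun _ _ => rfl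
  have rinF : ∀ (x y : F), inner ℝ x y = Complex.re (inner ℂ x y) := fun _ _ => rfl
  let M : Submodule ℝ (WithLp 2 (E × F)) :=
  { carrier := {p | p.fst ∈ D ∧ f p.fst = p.snd}
    add_mem' := fun {p r} hp hr => by
      refine ⟨?_, ?_⟩
      · rw [WithLp.add_fst]; exact hsub.add_mem' hp.1 hr.1
      · rw [WithLp.add_fst, WithLp.add_snd, hanti.map_add' hp.1 hr.1, hp.2, hr.2]
    zero_mem' := by
      refine ⟨?_, ?_⟩
      · rw [WithLp.zero_fst]; exact hsub.1
      · rw [WithLp.zero_fst, WithLp.zero_snd]; exact hanti.map_zero' hsub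
    smul_mem' := fun r {p} hp => by
      refine ⟨?_, ?_⟩
      · rw [WithLp.smul_fst, ← hrsmulE]; exact hsub.smul_mem' hp.1 _
      · rw [WithLp.smul_fst, WithLp.smul_snd, ← hrsmulE, hanti.map_smul' hsub hp.1,
          Complex.conj_ofReal, hrsmulF, hp.2] }
  have hMc : IsClosed ((M : Submodule ℝ (WithLp 2 (E × F))) : Set (WithLp 2 (E × F))) := by
    have hset : ((M : Submodule ℝ (WithLp 2 (E × F))) : Set (WithLp 2 (E × F)))
        = (WithLp.equiv 2 (E × F)) ⁻¹' {p : E × F | p.1 ∈ D ∧ f p.1 = p.2} := rfl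
    rw [hset]
    exact hclosed.preimage (WithLp.prod_continuous_ofLp 2 E F)
  haveI : CompleteSpace M := hMc.completeSpace_coe
  set q0 : WithLp 2 (E × F) := (WithLp.equiv 2 (E × F)).symm (q, 0) with hq0def
  have hq0 : q0 ∈ Mᗮᗮ := by
    rw [Submodule.mem_orthogonal]
    intro v hv
    have hvM : ∀ x ∈ D, Complex.re (inner ℂ x v.fst) + Complex.re (inner ℂ (f x) v.snd)
        = 0 := by
      intro x hx
      have hm : (WithLp.equiv 2 (E × F)).symm (x, f x) ∈ M := by
        refine ⟨?_, ?_⟩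
        · rw [WithLp.equiv_symm_apply, WithLp.toLp_fst]; exact hx
        · rw [WithLp.equiv_symm_apply, WithLp.toLp_fst, WithLp.toLp_snd]
      have h0 := (Submodule.mem_orthogonal M v).1 hv _ hm
      rw [WithLp.prod_inner_apply] at h0
      rw [rinE, rinF] at h0
      exact h0
    have key : ∀ x ∈ D, (starRingEnd ℂ) ⟪f x, v.snd⟫ = ⟪x, -v.fst⟫ := by
      intro x hx
      have h1 := hvM x hx
      have hix : Complex.I • x ∈ D := hsub.smul_mem' hx Complex.I
      have h2 := hvM _ hix
      rw [inner_smul_left, hanti.map_smul' hsub hx, inner_smul_left] at h2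
      simp only [Complex.conj_I, Complex.conj_conj, map_neg, neg_neg] at h2
      rw [inner_neg_right]
      have hre : Complex.re ⟪f x, v.snd⟫ = -Complex.re ⟪x, v.fst⟫ := by linarith
      have him : Complex.im ⟪f x, v.snd⟫ = Complex.im ⟪x, v.fst⟫ := by
        have e1 : Complex.re (-Complex.I * ⟪x, v.fst⟫) = Complex.im ⟪x, v.fst⟫ := by
          simp [Complex.mul_re]
        have e2 : Complex.re (Complex.I * ⟪f x, v.snd⟫) = -Complex.im ⟪f x, v.snd⟫ := by
          simp [Complex.mul_re]
        rw [e1, e2] at h2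
        linarith
      apply Complex.ext
      · simp only [Complex.neg_re]
        rw [← hre]
        rfl
      · simp only [Complex.neg_im]
        rw [← him]
        rfl
    have hb : v.snd ∈ sharpDom D f := ⟨-v.fst, key⟩
    have hgb : sharpFun D f v.snd = -v.fst := sharpFun_eq hdense key
    have hqa : inner ℂ (-v.fst) q = 0 := by
      rw [← hgb]; exact hq _ ⟨v.snd, hb, rfl⟩
    rw [inner_neg_left, neg_eq_zero] at hqa
    show Complex.re (inner ℂ v.fst q) + Complex.re (inner ℂ v.snd (0 : F)) = 0
    rw [hqa, inner_zero_right]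
    simp
  rw [Submodule.orthogonal_orthogonal M] at hq0
  exact ⟨hq0.1, hq0.2⟩

end VonNeumann
section MainAux

variable {E F : Type*}
  [NormedAddCommGroup E] [InnerProductSpace ℂ E] [CompleteSpace E]
  [NormedAddCommGroup F] [InnerProductSpace ℂ F] [CompleteSpace F]

lemma sharpNull_set_eq {D : Set E} {f : E → F} (hd : Dense D) :
    {w : F | w ∈ sharpDom D f ∧ sharpFun D f w = 0} = perpSet (f '' D) := by
  ext w
  rw [Set.mem_setOf_eq, sharp_null_iff hd, mem_perpSet]
  constructor
  · rintro h _ ⟨x, hx, rfl⟩; exact h x hx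
  · intro h x hx; exact h _ ⟨x, hx, rfl⟩

lemma nullPerp_sharp_eq {D : Set E} {f : E → F} (hd : Dense D) :
    nullPerp (sharpDom D f) (sharpFun D f) = perpSet (perpSet (f '' D)) := by
  unfold nullPerp
  rw [sharpNull_set_eq hd]

lemma pinvDomS_iff {D : Set E} {f : E → F} (hsub : IsLinSubspace D)
    (hanti : AntilinearOn D f) (hdense : Dense D) {u : E} :
    u ∈ pinvDom (sharpDom D f) (sharpFun D f) ↔
      ∃ w, w ∈ sharpDom D f ∧ w ∈ nullPerp (sharpDom D f) (sharpFun D f) ∧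
        sharpFun D f w - u ∈ perpSet (sharpFun D f '' sharpDom D f) := by
  constructor
  · rintro ⟨r, ⟨w₀, hw₀, rfl⟩, p, hp, rfl⟩
    obtain ⟨n, hn, hmn⟩ := decomp_closed (perpSub (f '' D)) (perpSub_isClosed _) w₀
    have hnS : n ∈ sharpDom D f ∧ sharpFun D f n = 0 :=
      (sharp_null_iff hdense).2 fun x hx => hn _ ⟨x, hx, rfl⟩
    have hsub' := sharpDom_sub hdense hw₀ hnS.1
    refine ⟨w₀ - n, hsub'.1, ?_, ?_⟩
    · rw [nullPerp_sharp_eq hdense]; exact hmn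
    · rw [hsub'.2, hnS.2, sub_zero,
        show sharpFun D f w₀ - (sharpFun D f w₀ + p) = -p by abel]
      exact perpSet_neg_mem hp
  · rintro ⟨w, hw, hwn, hwp⟩
    exact ⟨_, ⟨w, hw, rfl⟩, -(sharpFun D f w - u), perpSet_neg_mem hwp, by abel⟩

lemma pinvFunS_spec {D : Set E} {f : E → F} (hsub : IsLinSubspace D)
    (hanti : AntilinearOn D f) (hdense : Dense D) {u : E}
    (hu : u ∈ pinvDom (sharpDom D f) (sharpFun D f)) :
    pinvFun (sharpDom D f) (sharpFun D f) u ∈ sharpDom D f ∧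
      pinvFun (sharpDom D f) (sharpFun D f) u ∈ nullPerp (sharpDom D f) (sharpFun D f) ∧
      sharpFun D f (pinvFun (sharpDom D f) (sharpFun D f) u) - u
        ∈ perpSet (sharpFun D f '' sharpDom D f) := by
  have h := (pinvDomS_iff hsub hanti hdense).1 hu
  simp only [pinvFun, dif_pos h]
  exact h.choose_spec

/-- The key equivalence: the Moore–Penrose relation for `T^♯` coincides with the sharp-adjoint
relation for `T†`. -/
lemma cond_iff {D : Set E} {f : E → F} (hsub : IsLinSubspace D)
    (hanti : AntilinearOn D f) (hdense : Dense D) (hclosed : HasClosedGraph D f)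
    {u : E} {w : F} :
    (w ∈ sharpDom D f ∧ w ∈ nullPerp (sharpDom D f) (sharpFun D f) ∧
      sharpFun D f w - u ∈ perpSet (sharpFun D f '' sharpDom D f))
    ↔ (∀ y ∈ pinvDom D f, (starRingEnd ℂ) ⟪pinvFun D f y, u⟫ = ⟪y, w⟫) := by
  constructor
  · rintro ⟨hw, hwn, hwp⟩ y hy
    obtain ⟨hx, hxn, hxp⟩ := pinvFun_spec hsub hanti hclosed hy
    set x := pinvFun D f y with hxdef
    have hz : sharpFun D f w - u ∈ D ∧ f (sharpFun D f w - u) = 0 :=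
      null_of_perp_range_sharp hsub hanti hdense hclosed hwp
    have hwn' : ∀ z ∈ perpSet (f '' D), ⟪z, w⟫ = 0 := by
      rw [nullPerp_sharp_eq hdense] at hwn; exact hwn
    have h1 : ⟪f x - y, w⟫ = 0 := hwn' _ hxp
    have h2 : (starRingEnd ℂ) ⟪f x, w⟫ = ⟪x, sharpFun D f w⟫ := sharpFun_spec hw x hx
    have h3 : ⟪sharpFun D f w - u, x⟫ = 0 := hxn _ hz
    have h3' : ⟪sharpFun D f w, x⟫ = ⟪u, x⟫ := by
      rw [inner_sub_left] at h3; exact sub_eq_zero.mp h3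
    have h1' : ⟪f x, w⟫ = ⟪y, w⟫ := by
      rw [inner_sub_left] at h1; exact sub_eq_zero.mp h1
    calc (starRingEnd ℂ) ⟪x, u⟫ = ⟪u, x⟫ := by rw [inner_conj_symm]
      _ = ⟪sharpFun D f w, x⟫ := h3'.symm
      _ = (starRingEnd ℂ) ⟪x, sharpFun D f w⟫ := by rw [inner_conj_symm]
      _ = (starRingEnd ℂ) ((starRingEnd ℂ) ⟪f x, w⟫) := by rw [h2]
      _ = ⟪f x, w⟫ := Complex.conj_conj _
      _ = ⟪y, w⟫ := h1'
  · intro hC'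
    have hwn : ∀ z ∈ perpSet (f '' D), ⟪z, w⟫ = 0 := by
      intro z hz
      have hzdom : z ∈ pinvDom D f :=
        ⟨0, ⟨0, hsub.1, hanti.map_zero' hsub⟩, z, hz, (zero_add z).symm⟩
      have hz0 : pinvFun D f z = 0 :=
        pinvFun_eq hsub hanti hclosed ⟨hsub.1, perpSet_zero_mem _, by
          rw [hanti.map_zero' hsub, zero_sub]; exact perpSet_neg_mem hz⟩
      have h := hC' z hzdom
      rw [hz0, inner_zero_left, map_zero] at h
      exact h.symm
    obtain ⟨n₀, hn₀, hm⟩ := decomp_closed (nullSub hsub hanti)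
      (nullSub_isClosed hsub hanti hclosed) u
    have key : ∀ x ∈ D, (starRingEnd ℂ) ⟪f x, w⟫ = ⟪x, u - n₀⟫ := by
      intro x hx
      obtain ⟨n, hn, hm'⟩ := decomp_closed (nullSub hsub hanti)
        (nullSub_isClosed hsub hanti hclosed) x
      have hm'D : x - n ∈ D := hsub.sub_mem' hx hn.1
      have hfm' : f (x - n) = f x := by rw [hanti.map_sub' hx hn.1, hn.2, sub_zero]
      have hfxdom : f x ∈ pinvDom D f := ⟨f x, ⟨x, hx, rfl⟩, 0, perpSet_zero_mem _,
        (add_zero _).symm⟩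
      have hpfx : pinvFun D f (f x) = x - n :=
        pinvFun_eq hsub hanti hclosed ⟨hm'D, hm', by
          rw [hfm', sub_self]; exact perpSet_zero_mem _⟩
      have hC := hC' (f x) hfxdom
      rw [hpfx] at hC
      have h4 : ⟪x - n, u⟫ = ⟪x, u - n₀⟫ := by
        have hz0 : ⟪x - n, n₀⟫ = 0 := by
          rw [← inner_conj_symm, hm' n₀ hn₀, map_zero]
        have ha : ⟪x - n, u - n₀⟫ = ⟪x - n, u⟫ := by
          rw [inner_sub_right, hz0, sub_zero]
        have hb : ⟪x - n, u - n₀⟫ = ⟪x, u - n₀⟫ := by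
          rw [inner_sub_left, hm n hn, sub_zero]
        rw [← ha, hb]
      rw [← hC, Complex.conj_conj, h4]
    have hwdom : w ∈ sharpDom D f := ⟨u - n₀, key⟩
    have hgw : sharpFun D f w = u - n₀ := sharpFun_eq hdense key
    refine ⟨hwdom, ?_, ?_⟩
    · rw [nullPerp_sharp_eq hdense]; exact hwn
    · rw [hgw, show u - n₀ - u = -n₀ by abel]
      exact perpSet_neg_mem (null_mem_perp_range_sharp hn₀.1 hn₀.2)

end MainAux

/-- For a densely defined closed antilinear operator `T = (D, f)` from `H`
to `K`, the Moore–Penrose inverse of `T^♯` equals the antilinear adjoint of `T†`: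
`(T^♯)† = (T†)^♯`. -/
theorem pinv_sharp_eq_sharp_pinv
    (D : Set H) (f : H → K)
    (hsub : IsLinSubspace D) (hanti : AntilinearOn D f) (hdense : Dense D)
    (hclosed : HasClosedGraph D f) :
    pinvDom (sharpDom D f) (sharpFun D f) = sharpDom (pinvDom D f) (pinvFun D f) ∧
    ∀ x ∈ pinvDom (sharpDom D f) (sharpFun D f),
      pinvFun (sharpDom D f) (sharpFun D f) x
        = sharpFun (pinvDom D f) (pinvFun D f) x := by
  have domEq : pinvDom (sharpDom D f) (sharpFun D f)
      = sharpDom (pinvDom D f) (pinvFun D f) := by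
    ext u
    rw [pinvDomS_iff hsub hanti hdense]
    constructor
    · rintro ⟨w, hw⟩
      exact ⟨w, (cond_iff hsub hanti hdense hclosed).1 hw⟩
    · rintro ⟨w, hw⟩
      exact ⟨w, (cond_iff hsub hanti hdense hclosed).2 hw⟩
  refine ⟨domEq, fun u hu => ?_⟩
  have hw := pinvFunS_spec hsub hanti hdense hu
  have hC' := (cond_iff hsub hanti hdense hclosed).1 ⟨hw.1, hw.2.1, hw.2.2⟩
  have hus : u ∈ sharpDom (pinvDom D f) (pinvFun D f) := domEq ▸ hu
  have hspec := sharpFun_spec hus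
  exact dense_ext (pinvDom_dense hsub hanti) fun y hy => by
    rw [← hC' y hy]; exact hspec y hy
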